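/- For a finite group G, the Euler totient φ(G) := ∑_{H ≤ G} μ(H,G)·|H| equals the number of elements g ∈ G such that ⟨g⟩ = G. In particular, if φ(G) ≠ 0 then G is cyclic. -/

import Mathlib

open scoped Classical in
/-- Hall: the Euler totient `φ(G) = ∑_{H ≤ G} μ(H,G)|H|` of a finite group `G`
counts the elements `g` with `⟨g⟩ = G`; in particular if `φ(G) ≠ 0` then `G`
is cyclic. -/
theorem stmt3 {G : Type*} [Group G] [Fintype G]
    (μ : Subgroup G → Subgroup G → ℤ)
    (hμ_self : ∀ H : Subgroup G, μ H H = 1)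
    (hμ_lt : ∀ H K : Subgroup G, H < K →
      μ H K = -∑ L ∈ Finset.univ.filter (fun L : Subgroup G => H < L ∧ L ≤ K), μ L K) :
    (∑ H : Subgroup G, μ H ⊤ * (Nat.card H : ℤ)) =
      Nat.card {g : G // Subgroup.zpowers g = ⊤} ∧
    ((∑ H : Subgroup G, μ H ⊤ * (Nat.card H : ℤ)) ≠ 0 → IsCyclic G) := by
  classical
  set c : Subgroup G → ℤ :=
    fun K => ((Finset.univ.filter (fun g : G => Subgroup.zpowers g = K)).card : ℤ) with hc
  -- Möbius inversion key: column sums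
  have hmob : ∀ K : Subgroup G,
      (∑ H ∈ Finset.univ.filter (fun H : Subgroup G => K ≤ H), μ H ⊤)
        = if K = ⊤ then 1 else 0 := by
    intro K
    by_cases hK : K = ⊤
    · subst hK
      have : Finset.univ.filter (fun H : Subgroup G => (⊤ : Subgroup G) ≤ H) = {⊤} := by
        ext H
        simp [top_le_iff, eq_comm]
      rw [this]
      simp [hμ_self]
    · have hKlt : K < ⊤ := lt_top_iff_ne_top.mpr hK
      have hsplit : Finset.univ.filter (fun H : Subgroup G => K ≤ H)
          = insert K (Finset.univ.filter (fun H : Subgroup G => K < H ∧ H ≤ ⊤)) := by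
        ext H
        simp only [Finset.mem_filter, Finset.mem_univ, true_and, Finset.mem_insert]
        constructor
        · intro h
          rcases eq_or_lt_of_le h with h' | h'
          · exact Or.inl h'.symm
          · exact Or.inr ⟨h', le_top⟩
        · rintro (rfl | ⟨h, _⟩)
          · exact le_rfl
          · exact le_of_lt h
      have hKnot : K ∉ Finset.univ.filter (fun H : Subgroup G => K < H ∧ H ≤ ⊤) := by
        simp
      rw [hsplit, Finset.sum_insert hKnot, hμ_lt K ⊤ hKlt, if_neg hK]
      ring
  -- cardinality of H as a sum over cyclic subgroups contained in H
  have hcard : ∀ H : Subgroup G,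
      (Nat.card H : ℤ) = ∑ K ∈ Finset.univ.filter (fun K : Subgroup G => K ≤ H), c K := by
    intro H
    have h1 : Nat.card H = (Finset.univ.filter (fun g : G => g ∈ H)).card := by
      rw [Nat.card_eq_fintype_card, Fintype.card_subtype]
    have h2 : (Finset.univ.filter (fun g : G => g ∈ H)).card
        = ∑ K ∈ Finset.univ.filter (fun K : Subgroup G => K ≤ H),
            ((Finset.univ.filter (fun g : G => g ∈ H)).filter
              (fun g => Subgroup.zpowers g = K)).card := by
      apply Finset.card_eq_sum_card_fiberwise
      intro g hg
      simp only [Finset.mem_coe, Finset.mem_filter, Finset.mem_univ, true_and] at hg ⊢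
      exact (Subgroup.zpowers_le).mpr hg
    have h3 : ∀ K ∈ Finset.univ.filter (fun K : Subgroup G => K ≤ H),
        ((Finset.univ.filter (fun g : G => g ∈ H)).filter
          (fun g => Subgroup.zpowers g = K)).card
        = (Finset.univ.filter (fun g : G => Subgroup.zpowers g = K)).card := by
      intro K hK
      simp only [Finset.mem_filter, Finset.mem_univ, true_and] at hK
      congr 1
      ext g
      simp only [Finset.mem_filter, Finset.mem_univ, true_and, and_iff_right_iff_imp]
      intro hg
      have : Subgroup.zpowers g ≤ H := hg ▸ hK
      exact this (Subgroup.mem_zpowers g)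
    rw [h1, h2]
    push_cast
    exact Finset.sum_congr rfl (fun K hK => by rw [h3 K hK])
  -- main computation
  have hmain : (∑ H : Subgroup G, μ H ⊤ * (Nat.card H : ℤ)) = c ⊤ := by
    calc (∑ H : Subgroup G, μ H ⊤ * (Nat.card H : ℤ))
        = ∑ H : Subgroup G, ∑ K : Subgroup G, (if K ≤ H then μ H ⊤ * c K else 0) := by
          apply Finset.sum_congr rfl
          intro H _
          rw [hcard H, Finset.mul_sum, ← Finset.sum_filter]
      _ = ∑ K : Subgroup G, ∑ H : Subgroup G, (if K ≤ H then μ H ⊤ * c K else 0) :=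
          Finset.sum_comm
      _ = ∑ K : Subgroup G, (∑ H ∈ Finset.univ.filter (fun H : Subgroup G => K ≤ H), μ H ⊤) * c K := by
          apply Finset.sum_congr rfl
          intro K _
          rw [Finset.sum_filter, Finset.sum_mul]
          apply Finset.sum_congr rfl
          intro H _
          split <;> simp
      _ = ∑ K : Subgroup G, (if K = ⊤ then 1 else 0) * c K := by
          exact Finset.sum_congr rfl (fun K _ => by rw [hmob K])
      _ = c ⊤ := by simp
  have hctop : c ⊤ = Nat.card {g : G // Subgroup.zpowers g = ⊤} := by
    rw [Nat.card_eq_fintype_card, Fintype.card_subtype]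
  constructor
  · rw [hmain, hctop]
  · intro hne
    rw [hmain, hctop] at hne
    have : Nat.card {g : G // Subgroup.zpowers g = ⊤} ≠ 0 := by
      exact_mod_cast hne
    have hpos : 0 < Nat.card {g : G // Subgroup.zpowers g = ⊤} := Nat.pos_of_ne_zero this
    have : Nonempty {g : G // Subgroup.zpowers g = ⊤} := Nat.card_pos_iff.mp hpos |>.1
    obtain ⟨g, hg⟩ := this
    exact ⟨⟨g, fun x => by rw [← Subgroup.mem_zpowers_iff, hg]; trivial⟩⟩
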